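/- If α is an ordinal satisfying ω · α = α, then the least ordinal β such that the lexicographic power 2^α embeds into I^β (I = [0,1]) equals α, i.e., I-dim(2^α) = α. -/

import Mathlib

open Ordinal Classical

set_option linter.unusedSectionVars false

section Key
variable {A B : Type*} [LinearOrder A] [LinearOrder B] [WellFoundedLT A] [WellFoundedLT B]
  [Nonempty B] (e : Lex (A → Bool) ↪o Lex (B → Bool))

/-- class of functions agreeing with p strictly below a -/
def CC (a : A) (p : A → Bool) : Set (A → Bool) := {y | ∀ a' < a, y a' = p a'}

/-- class of functions agreeing with p strictly below a and equal to t at a -/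
def CCc (a : A) (p : A → Bool) (t : Bool) : Set (A → Bool) :=
  {y | (∀ a' < a, y a' = p a') ∧ y a = t}

/-- positions where images of two elements of S differ -/
def DD (S : Set (A → Bool)) : Set B :=
  {b | ∃ y ∈ S, ∃ z ∈ S, e (toLex y) b ≠ e (toLex z) b}

lemma DD_mono {S S' : Set (A → Bool)} (h : S' ⊆ S) : DD e S' ⊆ DD e S := by
  rintro b ⟨y, hy, z, hz, hne⟩; exact ⟨y, h hy, z, h hz, hne⟩

lemma DD_nonempty {S : Set (A → Bool)} {y z : A → Bool} (hy : y ∈ S) (hz : z ∈ S)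
    (hne : y ≠ z) : (DD e S).Nonempty := by
  have h1 : e (toLex y) ≠ e (toLex z) := fun hc => hne (toLex.injective (e.injective hc))
  have h2 : ∃ b, e (toLex y) b ≠ e (toLex z) b := by
    by_contra hc; push_neg at hc
    exact h1 (funext hc)
  obtain ⟨b, hb⟩ := h2
  exact ⟨b, y, hy, z, hz, hb⟩

noncomputable def gam (S : Set (A → Bool)) : B :=
  if h : (DD e S).Nonempty then (wellFounded_lt (α := B)).min _ h else Classical.arbitrary B

lemma gam_mem {S : Set (A → Bool)} (h : (DD e S).Nonempty) : gam e S ∈ DD e S := by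
  rw [gam, dif_pos h]; exact (wellFounded_lt (α := B)).min_mem _ h

lemma agree_below {S : Set (A → Bool)} (h : (DD e S).Nonempty) {b : B} (hb : b < gam e S)
    {y z : A → Bool} (hy : y ∈ S) (hz : z ∈ S) :
    e (toLex y) b = e (toLex z) b := by
  rw [gam, dif_pos h] at hb
  have := fun hx : b ∈ DD e S => (wellFounded_lt (α := B)).not_lt_min _ hx
  by_contra hc
  exact this ⟨y, hy, z, hz, hc⟩ hb

lemma gam_mono {S S' : Set (A → Bool)} (hsub : S' ⊆ S) (h' : (DD e S').Nonempty) :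
    gam e S ≤ gam e S' := by
  have h : (DD e S).Nonempty := h'.mono (DD_mono e hsub)
  rw [gam, gam, dif_pos h, dif_pos h']
  exact not_lt.mp ((wellFounded_lt (α := B)).not_lt_min _
    (DD_mono e hsub ((wellFounded_lt (α := B)).min_mem _ h')))

/-- canonical element of CCc a p t -/
def extF (a : A) (p : A → Bool) (t : Bool) : A → Bool :=
  fun a' => if a' < a then p a' else if a' = a then t else false

lemma extF_mem_CCc (a : A) (p : A → Bool) (t : Bool) : extF a p t ∈ CCc a p t := by
  constructor
  · intro a' ha'; simp [extF, ha']
  · simp [extF, lt_irrefl]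

lemma CCc_subset_CC (a : A) (p : A → Bool) (t : Bool) : CCc a p t ⊆ CC a p :=
  fun _ hy => hy.1

lemma CC_nonempty2 (a : A) (p : A → Bool) :
    ∃ y ∈ CC a p, ∃ z ∈ CC a p, y ≠ z := by
  refine ⟨extF a p false, CCc_subset_CC a p false (extF_mem_CCc a p false),
          extF a p true, CCc_subset_CC a p true (extF_mem_CCc a p true), fun hc => ?_⟩
  have h1 := (extF_mem_CCc a p false).2
  have h2 := (extF_mem_CCc a p true).2
  rw [hc] at h1
  rw [h1] at h2
  exact Bool.noConfusion h2

lemma CCc_nonempty2 (a : A) (p : A → Bool) (t : Bool) {c : A} (hc : a < c) :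
    ∃ y ∈ CCc a p t, ∃ z ∈ CCc a p t, y ≠ z := by
  refine ⟨extF a p t, extF_mem_CCc a p t,
    Function.update (extF a p t) c true, ?_, fun hcon => ?_⟩
  · constructor
    · intro a' ha'
      rw [Function.update_of_ne (by exact (ha'.trans hc).ne)]
      exact (extF_mem_CCc a p t).1 a' ha'
    · rw [Function.update_of_ne hc.ne]
      exact (extF_mem_CCc a p t).2
  · have := congrFun hcon c
    rw [Function.update_self] at this
    simp [extF, not_lt.mpr hc.le, hc.ne'] at this

lemma DD_CC_nonempty (a : A) (p : A → Bool) : (DD e (CC a p)).Nonempty := by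
  obtain ⟨y, hy, z, hz, hne⟩ := CC_nonempty2 (A := A) a p
  exact DD_nonempty e hy hz hne

lemma DD_CCc_nonempty (a : A) (p : A → Bool) (t : Bool) {c : A} (hc : a < c) :
    (DD e (CCc a p t)).Nonempty := by
  obtain ⟨y, hy, z, hz, hne⟩ := CCc_nonempty2 (A := A) a p t hc
  exact DD_nonempty e hy hz hne

/-- Key step: for some bit t, the child class has strictly larger splitting level. -/
lemma key_step (a : A) (p : A → Bool) {c : A} (hc : a < c) :
    ∃ t : Bool, gam e (CC a p) < gam e (CCc a p t) := by
  set g := gam e (CC a p) with hg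
  have hCC := DD_CC_nonempty e a p
  have hle : ∀ t, g ≤ gam e (CCc a p t) :=
    fun t => gam_mono e (CCc_subset_CC a p t) (DD_CCc_nonempty e a p t hc)
  by_contra hcon
  push_neg at hcon
  have heq : ∀ t, gam e (CCc a p t) = g := fun t => le_antisymm (hcon t) (hle t)
  have hu : ∃ u ∈ CCc a p false, e (toLex u) g = true := by
    obtain ⟨y, hy, z, hz, hne⟩ := gam_mem e (DD_CCc_nonempty e a p false hc)
    rw [heq] at hne
    rcases Bool.eq_false_or_eq_true (e (toLex y) g) with h1 | h1
    · exact ⟨y, hy, h1⟩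
    · refine ⟨z, hz, ?_⟩
      rcases Bool.eq_false_or_eq_true (e (toLex z) g) with h2 | h2
      · exact h2
      · exact absurd (h1.trans h2.symm) hne
  have hv : ∃ v ∈ CCc a p true, e (toLex v) g = false := by
    obtain ⟨y, hy, z, hz, hne⟩ := gam_mem e (DD_CCc_nonempty e a p true hc)
    rw [heq] at hne
    rcases Bool.eq_false_or_eq_true (e (toLex y) g) with h1 | h1
    · refine ⟨z, hz, ?_⟩
      rcases Bool.eq_false_or_eq_true (e (toLex z) g) with h2 | h2
      · exact absurd (h1.trans h2.symm) hne
      · exact h2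
    · exact ⟨y, hy, h1⟩
  obtain ⟨u, hu, hug⟩ := hu
  obtain ⟨v, hv, hvg⟩ := hv
  have huv : toLex u < toLex v := by
    refine ⟨a, fun j hj => (hu.1 j hj).trans (hv.1 j hj).symm, ?_⟩
    show u a < v a
    rw [hu.2, hv.2]; exact Bool.false_lt_true
  have hEuv : e (toLex u) < e (toLex v) := e.strictMono huv
  obtain ⟨i, hbelow, hi⟩ := hEuv
  rcases lt_trichotomy i g with h1 | h1 | h1
  · have h2 := agree_below e hCC h1 (CCc_subset_CC a p false hu) (CCc_subset_CC a p true hv)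
    change e (toLex u) i < e (toLex v) i at hi
    rw [h2] at hi; exact lt_irrefl _ hi
  · change e (toLex u) i < e (toLex v) i at hi
    rw [h1, hug, hvg] at hi
    exact absurd hi (by decide)
  · have h2 := hbelow g h1
    change e (toLex u) g = e (toLex v) g at h2
    rw [hug, hvg] at h2; exact Bool.noConfusion h2

end Key

section Key2
variable {A B : Type*} [LinearOrder A] [LinearOrder B] [WellFoundedLT A] [WellFoundedLT B]
  [Nonempty B] (e : Lex (A → Bool) ↪o Lex (B → Bool))

lemma CC_congr {a : A} {p q : A → Bool} (hpq : ∀ a' < a, p a' = q a') : CC a p = CC a q := by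
  ext y
  exact ⟨fun hy a' ha' => (hy a' ha').trans (hpq a' ha'),
         fun hy a' ha' => (hy a' ha').trans (hpq a' ha').symm⟩

lemma CCc_congr {a : A} {p q : A → Bool} {t : Bool} (hpq : ∀ a' < a, p a' = q a') :
    CCc a p t = CCc a q t := by
  ext y
  exact ⟨fun hy => ⟨fun a' ha' => (hy.1 a' ha').trans (hpq a' ha'), hy.2⟩,
         fun hy => ⟨fun a' ha' => (hy.1 a' ha').trans (hpq a' ha').symm, hy.2⟩⟩

noncomputable def tchoose (a : A) (p : A → Bool) : Bool :=
  if gam e (CC a p) < gam e (CCc a p true) then true else false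

lemma tchoose_congr {a : A} {p q : A → Bool} (hpq : ∀ a' < a, p a' = q a') :
    tchoose e a p = tchoose e a q := by
  rw [tchoose, tchoose, CC_congr hpq, CCc_congr hpq]

lemma tchoose_spec (a : A) (p : A → Bool) {c : A} (hc : a < c) :
    gam e (CC a p) < gam e (CCc a p (tchoose e a p)) := by
  rw [tchoose]
  split_ifs with hcase
  · exact hcase
  · obtain ⟨t, ht⟩ := key_step e a p hc
    cases t
    · exact ht
    · exact absurd ht hcase

noncomputable def xfun : A → Bool :=
  (wellFounded_lt (α := A)).fix
    (fun a ih => tchoose e a (fun a' => if h : a' < a then ih a' h else false))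

lemma xfun_eq (a : A) : xfun e a = tchoose e a (xfun e) := by
  rw [xfun, WellFounded.fix_eq]
  exact tchoose_congr e (fun a' ha' => by rw [dif_pos ha'])

include e in
theorem key_abstract (j : B → A) (hj : StrictMono j) (top : A) (hjt : ∀ b, j b < top) : False := by
  set x := xfun e with hx
  -- for b' < b (in the sense j b' < a), the class below a refines the chosen child class at j b'
  have hsub : ∀ (b' : B) (a : A), j b' < a → CC a x ⊆ CCc (j b') x (tchoose e (j b') x) := by
    intro b' a ha y hy
    have hxa : x (j b') = tchoose e (j b') x := xfun_eq e (j b')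
    exact ⟨fun a' ha' => hy a' (ha'.trans ha), (hy (j b') ha).trans hxa⟩
  have chain : ∀ (b' : B) (a : A), j b' < a →
      gam e (CC (j b') x) < gam e (CC a x) := by
    intro b' a ha
    have h2 : gam e (CC (j b') x) < gam e (CCc (j b') x (tchoose e (j b') x)) :=
      tchoose_spec e (j b') x ha
    have h3 : gam e (CCc (j b') x (tchoose e (j b') x)) ≤ gam e (CC a x) :=
      gam_mono e (hsub b' a ha) (DD_CC_nonempty e a x)
    exact h2.trans_le h3
  have inv : ∀ b : B, b ≤ gam e (CC (j b) x) := by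
    intro b
    induction b using WellFoundedLT.induction with
    | ind b IH =>
      refine le_of_forall_lt fun b' hb' => ?_
      exact (IH b' hb').trans_lt (chain b' (j b) (hj hb'))
  have final : ∀ b : B, b < gam e (CC top x) :=
    fun b => (inv b).trans_lt (chain b top (hjt b))
  exact lt_irrefl _ (final (gam e (CC top x)))

end Key2

theorem key_ord {α δ : Ordinal} (h : δ < α)
    (e : Lex (α.ToType → Bool) ↪o Lex (δ.ToType → Bool)) : False := by
  have hαne : α ≠ 0 := ((zero_le (a := δ)).trans_lt h).ne'
  have hA : Nonempty α.ToType := Ordinal.nonempty_toType_iff.mpr hαne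
  by_cases hB : Nonempty δ.ToType
  · let ι := ToType.mk (o := α)
    let ιδ := (ToType.mk (o := δ)).symm
    let j : δ.ToType → α.ToType := fun b => ι ⟨(ιδ b : Set.Iio δ).1, Set.mem_Iio.mpr (lt_trans (Set.mem_Iio.mp (ιδ b).2) h)⟩
    have hj : StrictMono j := by
      intro b b' hbb
      apply ι.strictMono
      exact Subtype.mk_lt_mk.mpr (Subtype.coe_lt_coe.mpr (ιδ.strictMono hbb))
    have hjt : ∀ b, j b < ι ⟨δ, h⟩ := by
      intro b
      apply ι.strictMono
      exact Subtype.mk_lt_mk.mpr (Set.mem_Iio.mp (ιδ b).2)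
    exact key_abstract e j hj (ι ⟨δ, h⟩) hjt
  · rw [not_nonempty_iff] at hB
    obtain ⟨a0⟩ := hA
    have himg : e (toLex (fun _ => false)) = e (toLex (fun _ => true)) := by
      apply funext
      intro b
      exact (hB.false b).elim
    have := congrFun (toLex.injective (e.injective himg)) a0
    exact Bool.noConfusion this

lemma lift_lex_strictMono {ι X Y : Type*} [LinearOrder ι] [LinearOrder X] [LinearOrder Y]
    {g : X → Y} (hg : StrictMono g) :
    StrictMono (fun f : Lex (ι → X) => toLex (g ∘ ofLex f)) := by
  intro f f' hff
  obtain ⟨i, hbelow, hi⟩ := hff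
  exact ⟨i, fun j hj => congrArg g (hbelow j hj), hg hi⟩

noncomputable def iEmb {N : Type*} (q : N → ℚ) (x : Set.Icc (0:ℝ) 1) : N → Bool :=
  fun n => decide ((q n : ℝ) ≤ x)

lemma iEmb_strictMono {N : Type*} [LinearOrder N] [WellFoundedLT N] {q : N → ℚ}
    (hq : Function.Surjective q) :
    StrictMono (fun x : Set.Icc (0:ℝ) 1 => toLex (iEmb q x)) := by
  intro x y hxy
  apply Pi.toLex_strictMono
  rw [lt_iff_le_and_ne]
  constructor
  · intro n
    simp only [iEmb]
    rcases le_or_gt ((q n : ℝ)) x with hle | hlt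
    · simp [hle, hle.trans hxy.le]
    · simp [not_le.mpr hlt]
  · obtain ⟨r, hq1, hq2⟩ := exists_rat_btwn (show (x:ℝ) < y from hxy)
    obtain ⟨n, hn⟩ := hq r
    intro hc
    have hfc := congrFun hc n
    rw [show iEmb q x n = decide ((q n : ℝ) ≤ (x:ℝ)) from rfl,
        show iEmb q y n = decide ((q n : ℝ) ≤ (y:ℝ)) from rfl, hn] at hfc
    simp [not_le.mpr hq1, hq2.le] at hfc

lemma reindex_strictMono {B C N : Type*} [LinearOrder B] [LinearOrder C] [LinearOrder N]
    (ψ : ((· < ·) : C → C → Prop) ≃r Prod.Lex ((· < ·) : B → B → Prop) ((· < ·) : N → N → Prop)) :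
    StrictMono (fun F : Lex (B → Lex (N → Bool)) =>
      toLex (fun c : C => ofLex (ofLex F (ψ c).1) (ψ c).2)) := by
  intro F F' hFF
  obtain ⟨b, hbelow, hb⟩ := hFF
  obtain ⟨n, hnbelow, hn⟩ := hb
  have hψ : ψ (ψ.symm (b, n)) = (b, n) := ψ.apply_symm_apply _
  refine ⟨ψ.symm (b, n), ?_, ?_⟩
  · intro c hc
    have h2 : Prod.Lex ((· < ·) : B → B → Prop) ((· < ·) : N → N → Prop) (ψ c)
        (ψ (ψ.symm (b, n))) := ψ.map_rel_iff.mpr hc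
    rw [hψ] at h2
    rcases Prod.lex_iff.mp h2 with h3 | ⟨h3, h4⟩
    · exact congrArg (fun z : Lex (N → Bool) => ofLex z (ψ c).2) (hbelow _ h3)
    · show ofLex (ofLex F (ψ c).1) (ψ c).2 = ofLex (ofLex F' (ψ c).1) (ψ c).2
      rw [h3]
      exact hnbelow _ h4
  · show ofLex (ofLex F (ψ (ψ.symm (b, n))).1) (ψ (ψ.symm (b, n))).2 <
      ofLex (ofLex F' (ψ (ψ.symm (b, n))).1) (ψ (ψ.symm (b, n))).2
    rw [hψ]
    exact hn

noncomputable def boolToI : Bool → Set.Icc (0:ℝ) 1 :=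
  fun b => if b then ⟨1, by norm_num⟩ else ⟨0, by norm_num⟩

lemma boolToI_strictMono : StrictMono boolToI := by
  intro b b' hbb
  obtain ⟨hb, hb'⟩ := Bool.lt_iff.mp hbb
  subst hb; subst hb'
  simp only [boolToI, if_true, if_false]
  exact Subtype.mk_lt_mk.mpr zero_lt_one

theorem lower_aux {α β : Ordinal.{u}} (hδ : (omega0 : Ordinal.{u}) * β < α)
    (e : Lex (α.ToType → Bool) ↪o Lex (β.ToType → Set.Icc (0 : ℝ) 1)) : False := by
  set N : Type u := (omega0 : Ordinal.{u}).ToType with hN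
  obtain ⟨ι⟩ : Nonempty (ℚ ↪ N) := by
    rw [← Cardinal.lift_mk_le']
    rw [hN, Cardinal.mk_toType, card_omega0, Cardinal.mkRat]
    simp
  have hq : Function.Surjective (Function.invFun ι) :=
    Function.invFun_surjective ι.injective
  obtain ⟨ψ⟩ : Nonempty ((((· < ·)) : ((omega0 : Ordinal.{u})*β).ToType →
        ((omega0 : Ordinal.{u})*β).ToType → Prop) ≃r
      Prod.Lex ((· < ·) : β.ToType → β.ToType → Prop) ((· < ·) : N → N → Prop)) := by
    haveI i0 : IsWellOrder ((omega0 : Ordinal.{u})*β).ToType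
        ((· < ·) : ((omega0 : Ordinal.{u})*β).ToType → ((omega0 : Ordinal.{u})*β).ToType → Prop) :=
      isWellOrder_lt
    haveI i1 : IsWellOrder β.ToType ((· < ·) : β.ToType → β.ToType → Prop) := isWellOrder_lt
    haveI iN : IsWellOrder N ((· < ·) : N → N → Prop) := isWellOrder_lt
    haveI i2 : IsWellOrder (β.ToType × N)
        (Prod.Lex ((· < ·) : β.ToType → β.ToType → Prop) ((· < ·) : N → N → Prop)) :=
      inferInstance
    refine (@Ordinal.type_eq ((omega0 : Ordinal.{u})*β).ToType (β.ToType × N) _ _ i0 i2).mp ?_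
    have h1 := @type_prod_lex N β.ToType _ _ iN i1
    rw [show (type ((· < ·) : N → N → Prop) : Ordinal.{u}) = omega0 from type_toType _,
        type_toType] at h1
    rw [type_toType, h1]
  have sm1 : StrictMono (fun x : Set.Icc (0:ℝ) 1 => toLex (iEmb (Function.invFun ι) x)) :=
    iEmb_strictMono hq
  have sm2 : StrictMono (fun F : Lex (β.ToType → Set.Icc (0:ℝ) 1) =>
      toLex ((fun x : Set.Icc (0:ℝ) 1 => toLex (iEmb (Function.invFun ι) x)) ∘ ofLex F)) :=
    lift_lex_strictMono sm1
  have sm3 : StrictMono (fun f : Lex (α.ToType → Bool) =>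
      toLex (fun c : ((omega0 : Ordinal.{u})*β).ToType =>
        ofLex (ofLex (toLex ((fun x : Set.Icc (0:ℝ) 1 =>
          toLex (iEmb (Function.invFun ι) x)) ∘ ofLex (e f))) (ψ c).1) (ψ c).2)) := by
    intro f f' hff
    exact reindex_strictMono ψ (sm2 (e.strictMono hff))
  exact key_ord hδ (OrderEmbedding.ofStrictMono _ sm3)

theorem stmt14 (α : Ordinal) (h : Ordinal.omega0 * α = α) :
    sInf {β : Ordinal |
      Nonempty (Lex (α.ToType → Bool) ↪o Lex (β.ToType → Set.Icc (0 : ℝ) 1))} = α := by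
  have hmem : α ∈ {β : Ordinal |
      Nonempty (Lex (α.ToType → Bool) ↪o Lex (β.ToType → Set.Icc (0 : ℝ) 1))} :=
    ⟨OrderEmbedding.ofStrictMono _ (lift_lex_strictMono boolToI_strictMono)⟩
  apply le_antisymm
  · exact csInf_le' hmem
  · refine le_csInf ⟨α, hmem⟩ fun β hβ => ?_
    by_contra hlt
    push_neg at hlt
    obtain ⟨e⟩ := hβ
    have hδ : omega0 * β < α := by
      calc omega0 * β < omega0 * α := mul_lt_mul_of_pos_left hlt omega0_pos
        _ = α := h
    exact lower_aux hδ e
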